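/- arXiv:1511.07907 — 4 statements merged into one kernel-verified Lean document; each statement's English description precedes it below -/
import Mathlib

section
/- Under the setting of the indifference-point equation, the unique root x* of k_p·d·Δp + k_l·(2x−x1−x2) + k_q·(q1(x+L) − q2(L−x)) = 0 is strictly decreasing in the price difference Δp = p1 − p2: if Δp' > Δp and x*(Δp'), x*(Δp) are the corresponding roots, then x*(Δp') < x*(Δp). -/
theorem indifference_point_strictly_decreasing_in_price_difference
    (kp kl kq d L x1 x2 : ℝ)
    (hkp : 0 < kp) (hkl : 0 < kl) (hkq : 0 < kq) (hd : 0 < d)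
    (hL : 0 < L) (hx1 : -L < x1) (hx : x1 < x2) (hx2 : x2 < L)
    (q1 q2 : ℝ → ℝ)
    (hq1c : Continuous q1) (hq2c : Continuous q2)
    (hq1 : Monotone q1) (hq2 : Monotone q2)
    (Δp Δp' xs xs' : ℝ)
    (hΔ : Δp < Δp')
    (hxs : xs ∈ Set.Ioo x1 x2) (hxs' : xs' ∈ Set.Ioo x1 x2)
    (hroot : kp * d * Δp + kl * (2 * xs - x1 - x2)
        + kq * (q1 (xs + L) - q2 (L - xs)) = 0)
    (hroot' : kp * d * Δp' + kl * (2 * xs' - x1 - x2)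
        + kq * (q1 (xs' + L) - q2 (L - xs')) = 0) :
    xs' < xs := by
  by_contra h
  push_neg at h
  have h1 : q1 (xs + L) ≤ q1 (xs' + L) := hq1 (by linarith)
  have h2 : q2 (L - xs') ≤ q2 (L - xs) := hq2 (by linarith)
  nlinarith [mul_lt_mul_of_pos_left hΔ (mul_pos hkp hd),
    mul_le_mul_of_nonneg_left (sub_le_sub h1 h2) hkq.le]
end

section
/- Let g(ω) = k_p·d·(p1−p2) + k_l·(x1−x2) + k_q·(q1((x1+L)·ω) − q2(L−x1+(x1+L)·(1−ω))), where q1, q2 are continuous nondecreasing functions. If θ1R ≤ p1−p2 < θ2R, where θ2R = (k_q·q2(2L) + k_l·(x2−x1))/(k_p·d) and θ1R = (k_q·(q2(L−x1)−q1(x1+L)) + k_l·(x2−x1))/(k_p·d), then g has a unique root ω1 in [0,1]. -/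
theorem mixed_strategy_unique_root
    (kp kl kq d L x1 x2 p1 p2 : ℝ)
    (hkp : 0 < kp) (hkl : 0 < kl) (hkq : 0 < kq) (hd : 0 < d)
    (hL : 0 < L) (hx1 : -L < x1) (hx : x1 < x2) (hx2 : x2 < L)
    (q1 q2 : ℝ → ℝ)
    (hq1c : Continuous q1) (hq2c : Continuous q2)
    (hq1 : StrictMono q1) (hq2 : StrictMono q2)
    (hq10 : q1 0 = 0) (hq20 : q2 0 = 0)
    (θ1R θ2R : ℝ)
    (hθ1R : θ1R = (kq * (q2 (L - x1) - q1 (x1 + L)) + kl * (x2 - x1)) / (kp * d))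
    (hθ2R : θ2R = (kq * q2 (2 * L) + kl * (x2 - x1)) / (kp * d))
    (hlo : θ1R ≤ p1 - p2) (hhi : p1 - p2 < θ2R) :
    ∃! ω : ℝ, ω ∈ Set.Icc (0 : ℝ) 1 ∧
      kp * d * (p1 - p2) + kl * (x1 - x2)
        + kq * (q1 ((x1 + L) * ω) - q2 (L - x1 + (x1 + L) * (1 - ω))) = 0 := by
  have hxL : 0 < x1 + L := by linarith
  have hkpd : 0 < kp * d := mul_pos hkp hd
  set g : ℝ → ℝ := fun ω => kp * d * (p1 - p2) + kl * (x1 - x2)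
        + kq * (q1 ((x1 + L) * ω) - q2 (L - x1 + (x1 + L) * (1 - ω))) with hg
  have hgmono : StrictMono g := by
    intro a b hab
    have h1 : q1 ((x1 + L) * a) < q1 ((x1 + L) * b) := by
      apply hq1; exact mul_lt_mul_of_pos_left hab hxL
    have h2 : q2 (L - x1 + (x1 + L) * (1 - b)) < q2 (L - x1 + (x1 + L) * (1 - a)) := by
      apply hq2; nlinarith
    simp only [hg]
    nlinarith
  have hgc : Continuous g := by
    simp only [hg]
    fun_prop
  have hg0 : g 0 < 0 := by
    have h2 : kp * d * (p1 - p2) < kq * q2 (2 * L) + kl * (x2 - x1) := by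
      rw [hθ2R, lt_div_iff₀ hkpd] at hhi; nlinarith
    simp only [hg]
    have : (x1 + L) * (0:ℝ) = 0 := by ring
    rw [this, hq10]
    have : L - x1 + (x1 + L) * (1 - 0) = 2 * L := by ring
    rw [this]
    nlinarith
  have hg1 : 0 ≤ g 1 := by
    have h2 : kq * (q2 (L - x1) - q1 (x1 + L)) + kl * (x2 - x1) ≤ kp * d * (p1 - p2) := by
      rw [hθ1R, div_le_iff₀ hkpd] at hlo; nlinarith
    simp only [hg]
    have h3 : (x1 + L) * (1:ℝ) = x1 + L := by ring
    have h4 : L - x1 + (x1 + L) * (1 - 1) = L - x1 := by ring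
    rw [h3, h4]
    nlinarith
  have hiv : (0:ℝ) ∈ g '' Set.Icc 0 1 := by
    have := intermediate_value_Icc (by norm_num : (0:ℝ) ≤ 1) hgc.continuousOn
    exact this ⟨le_of_lt hg0, hg1⟩
  obtain ⟨ω, hωmem, hωeq⟩ := hiv
  refine ⟨ω, ⟨hωmem, hωeq⟩, ?_⟩
  rintro ω' ⟨_, hω'eq⟩
  exact hgmono.injective (by rw [show g ω' = 0 from hω'eq, show g ω = 0 from hωeq])
end

section
/- The mixed-strategy probability ω1, defined implicitly as the root in [0,1] of k_p·d·Δp + k_l·(x1−x2) + k_q·(q1((x1+L)·ω) − q2(L−x1+(x1+L)(1−ω))) = 0, is strictly decreasing in the price difference Δp = p1−p2. -/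
theorem mixed_strategy_prob_strictly_decreasing
    (kp kl kq d L x1 x2 : ℝ)
    (hkp : 0 < kp) (hkl : 0 < kl) (hkq : 0 < kq) (hd : 0 < d)
    (hL : 0 < L) (hx1 : -L < x1) (hx : x1 < x2) (hx2 : x2 < L)
    (q1 q2 : ℝ → ℝ)
    (hq1 : StrictMono q1) (hq2 : StrictMono q2)
    (Δp Δp' ω ω' : ℝ) (hΔ : Δp < Δp')
    (hω : ω ∈ Set.Icc (0 : ℝ) 1) (hω' : ω' ∈ Set.Icc (0 : ℝ) 1)
    (hroot : kp * d * Δp + kl * (x1 - x2)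
        + kq * (q1 ((x1 + L) * ω) - q2 (L - x1 + (x1 + L) * (1 - ω))) = 0)
    (hroot' : kp * d * Δp' + kl * (x1 - x2)
        + kq * (q1 ((x1 + L) * ω') - q2 (L - x1 + (x1 + L) * (1 - ω'))) = 0) :
    ω' < ω := by
  by_contra h
  push_neg at h
  have hxL : 0 < x1 + L := by linarith
  have h1 : q1 ((x1 + L) * ω) ≤ q1 ((x1 + L) * ω') :=
    hq1.monotone (by nlinarith)
  have h2 : q2 (L - x1 + (x1 + L) * (1 - ω')) ≤ q2 (L - x1 + (x1 + L) * (1 - ω)) :=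
    hq2.monotone (by nlinarith)
  have hkd : kp * d * Δp < kp * d * Δp' := by
    have : 0 < kp * d := mul_pos hkp hd
    nlinarith
  nlinarith
end

section
/- Uniqueness of the pricing equilibrium: let B1, B2 : [a,b] → [a,b] be monotone nondecreasing and suppose that for each i, the map p ↦ B_i(p) − p is strictly decreasing on [a,b]. Then there is at most one p* ∈ [a,b] with B1(B2(p*)) = p*. -/
theorem pricing_equilibrium_unique
    (a b : ℝ) (hab : a < b)
    (B1 B2 : ℝ → ℝ)
    (hB1map : Set.MapsTo B1 (Set.Icc a b) (Set.Icc a b))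
    (hB2map : Set.MapsTo B2 (Set.Icc a b) (Set.Icc a b))
    (hB1mono : MonotoneOn B1 (Set.Icc a b))
    (hB2mono : MonotoneOn B2 (Set.Icc a b))
    (hB1offset : StrictAntiOn (fun p => B1 p - p) (Set.Icc a b))
    (hB2offset : StrictAntiOn (fun p => B2 p - p) (Set.Icc a b)) :
    ∀ p ∈ Set.Icc a b, ∀ q ∈ Set.Icc a b,
      B1 (B2 p) = p → B1 (B2 q) = q → p = q := by
  have key : ∀ p ∈ Set.Icc a b, ∀ q ∈ Set.Icc a b,
      B1 (B2 p) = p → B1 (B2 q) = q → p < q → False := by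
    intro p hp q hq hfp hfq hpq
    have hBp := hB2map hp
    have hBq := hB2map hq
    have hle : B2 p ≤ B2 q := hB2mono hp hq hpq.le
    rcases eq_or_lt_of_le hle with heq | hlt
    · have : p = q := by rw [← hfp, ← hfq, heq]
      exact absurd this hpq.ne
    · have h1 : B1 (B2 q) - B2 q < B1 (B2 p) - B2 p := hB1offset hBp hBq hlt
      have h2 : B2 q - q < B2 p - p := hB2offset hp hq hpq
      rw [hfp, hfq] at h1
      linarith
  intro p hp q hq hfp hfq
  rcases lt_trichotomy p q with h | h | h
  · exact absurd (key p hp q hq hfp hfq h) not_false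
  · exact h
  · exact absurd (key q hq p hp hfq hfp h) not_false
end
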